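/- arXiv:1506.02620 — 2 statements merged into one kernel-verified Lean document; each statement's English description precedes it below -/
import Mathlib

section
/- Let H be a symmetric positive definite n×n matrix, α ∈ F, and let d* be the minimizer of the subproblem at α. Then ∇f(α)ᵀd* ≤ −(d*)ᵀH d*. In particular, if d* ≠ 0 then ∇f(α)ᵀd* < 0, i.e., d* is a strict descent direction for f at α. -/
open Matrix

/-- The subproblem minimizer is a (strict, when nonzero) descent direction:
∇f(α)ᵀd* ≤ −(d*)ᵀH d*, and ∇f(α)ᵀd* < 0 whenever d* ≠ 0. -/
theorem bqo_subproblem_minimizer_descent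
    {n : ℕ} (hn : 0 < n)
    (M : Matrix (Fin n) (Fin n) ℝ) (hM : M.PosSemidef) (v : Fin n → ℝ)
    (H : Matrix (Fin n) (Fin n) ℝ) (hH : H.PosDef)
    (α : Fin n → ℝ) (hα : ∀ i, 0 ≤ α i)
    (g : (Fin n → ℝ) → ℝ)
    (hg : ∀ d, g d = (M.mulVec α - v) ⬝ᵥ d + (1 / 2) * (d ⬝ᵥ H.mulVec d))
    (dstar : Fin n → ℝ) (hfeas : ∀ i, 0 ≤ α i + dstar i)
    (hmin : ∀ c : Fin n → ℝ, (∀ i, 0 ≤ α i + c i) → g dstar ≤ g c) :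
    (M.mulVec α - v) ⬝ᵥ dstar ≤ -(dstar ⬝ᵥ H.mulVec dstar) ∧
      (dstar ≠ 0 → (M.mulVec α - v) ⬝ᵥ dstar < 0) := by
  set G : ℝ := (M.mulVec α - v) ⬝ᵥ dstar with hG
  set Q : ℝ := dstar ⬝ᵥ H.mulVec dstar with hQdef
  have hQ0 : 0 ≤ Q := by simpa using hH.posSemidef.dotProduct_mulVec_nonneg dstar
  -- key inequality from minimality at scaled directions
  have key : ∀ s : ℝ, 0 ≤ s → s ≤ 1 → G + Q / 2 ≤ s * G + s ^ 2 * Q / 2 := by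
    intro s hs0 hs1
    have hfeas' : ∀ i, 0 ≤ α i + (s • dstar) i := by
      intro i
      have : α i + s * dstar i = (1 - s) * α i + s * (α i + dstar i) := by ring
      simp only [Pi.smul_apply, smul_eq_mul, this]
      have h1 : (0:ℝ) ≤ 1 - s := by linarith
      nlinarith [hα i, hfeas i]
    have h := hmin (s • dstar) hfeas'
    rw [hg, hg] at h
    rw [dotProduct_smul, Matrix.mulVec_smul, smul_dotProduct, dotProduct_smul] at h
    simp only [smul_eq_mul] at h
    nlinarith [h]
  have hmain : G ≤ -Q := by
    by_contra hc
    push_neg at hc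
    have hε : 0 < G + Q := by linarith
    rcases eq_or_lt_of_le hQ0 with hQz | hQpos
    · have h0 := key 0 le_rfl zero_le_one
      simp at h0
      nlinarith
    · set t : ℝ := min 1 ((G + Q) / Q) with ht
      have ht0 : 0 < t := lt_min one_pos (div_pos hε hQpos)
      have ht1 : t ≤ 1 := min_le_left _ _
      have h := key (1 - t) (by linarith) (by linarith)
      -- (1-t)... derive contradiction
      have htQ : t * Q ≤ (G + Q) := by
        have : t ≤ (G + Q) / Q := min_le_right _ _
        calc t * Q ≤ ((G + Q) / Q) * Q := by nlinarith
        _ = G + Q := by field_simp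
      nlinarith
  refine ⟨hmain, fun hd => ?_⟩
  have hQpos : 0 < Q := by simpa using hH.dotProduct_mulVec_pos hd
  linarith
end

section
/- Suppose α* minimizes the dual objective f(α) = (1/2)αᵀ(Q + A/(2C))α − vᵀα over {α ∈ ℝᵐ : α ≥ 0 componentwise}. Define w* = Σ_{j=1}^m α*_j φ_j and ξ*_i = (1/(2C)) Σ_{j : σ(j) = i} α*_j for i = 1,…,l. Then (w*, ξ*) is feasible for the primal problem, (w*, ξ*) is optimal for the primal problem, and the primal optimal value equals the negated dual optimal value: (1/2)‖w*‖² + C Σ_{i=1}^l (ξ*_i)² = −f(α*). -/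
open Matrix

private lemma ssvm_fiber_sum {m l : ℕ} (σ : Fin m → Fin l) (x : Fin m → ℝ) (F : Fin l → ℝ) :
    ∑ j, x j * F (σ j) = ∑ i, (∑ j ∈ Finset.univ.filter (fun j => σ j = i), x j) * F i := by
  rw [← Finset.sum_fiberwise Finset.univ σ (fun j => x j * F (σ j))]
  refine Finset.sum_congr rfl fun i _ => ?_
  rw [Finset.sum_mul]
  refine Finset.sum_congr rfl fun j hj => ?_
  simp only [Finset.mem_filter] at hj
  rw [hj.2]

set_option maxHeartbeats 1000000

/-- Strong duality / primal recovery for the L2-loss structured SVM: from a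
dual optimal α*, the pair (w*, ξ*) is primal feasible and primal optimal, and
the primal optimal value equals the negated dual optimal value. -/
theorem ssvm_dual_optimal_gives_primal_optimal
    {d l m : ℕ} (hd : 0 < d) (hl : 0 < l) (hm : 0 < m)
    (φ : Fin m → Fin d → ℝ) (v : Fin m → ℝ) (σ : Fin m → Fin l)
    (C : ℝ) (hC : 0 < C)
    (Q A : Matrix (Fin m) (Fin m) ℝ)
    (hQ : ∀ j k, Q j k = φ j ⬝ᵥ φ k)
    (hA : ∀ j k, A j k = if σ j = σ k then (1 : ℝ) else 0)
    (f : (Fin m → ℝ) → ℝ)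
    (hf : ∀ a, f a = (1 / 2) * (a ⬝ᵥ (Q + (1 / (2 * C)) • A).mulVec a) - v ⬝ᵥ a)
    (αstar : Fin m → ℝ) (hαnn : ∀ j, 0 ≤ αstar j)
    (hαopt : ∀ β : Fin m → ℝ, (∀ j, 0 ≤ β j) → f αstar ≤ f β)
    (wstar : Fin d → ℝ) (hw : wstar = ∑ j, αstar j • φ j)
    (ξstar : Fin l → ℝ)
    (hξ : ∀ i, ξstar i =
      (1 / (2 * C)) * ∑ j ∈ Finset.univ.filter (fun j => σ j = i), αstar j) :
    (∀ j, wstar ⬝ᵥ φ j ≥ v j - ξstar (σ j)) ∧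
    (∀ (w : Fin d → ℝ) (ξ : Fin l → ℝ), (∀ j, w ⬝ᵥ φ j ≥ v j - ξ (σ j)) →
      (1 / 2) * (wstar ⬝ᵥ wstar) + C * ∑ i, (ξstar i) ^ 2 ≤
        (1 / 2) * (w ⬝ᵥ w) + C * ∑ i, (ξ i) ^ 2) ∧
    (1 / 2) * (wstar ⬝ᵥ wstar) + C * ∑ i, (ξstar i) ^ 2 = -f αstar := by
  have hC2 : (0:ℝ) < 2 * C := by linarith
  set M : Matrix (Fin m) (Fin m) ℝ := Q + (1 / (2 * C)) • A with hMdef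
  -- basic dot-product-of-sums lemmas
  have hdsum_r : ∀ (u : Fin d → ℝ) (c : Fin m → ℝ),
      u ⬝ᵥ (∑ k, c k • φ k) = ∑ k, c k * (u ⬝ᵥ φ k) := by
    intro u c
    simp only [dotProduct, Finset.sum_apply, Pi.smul_apply, smul_eq_mul, Finset.mul_sum,
      Finset.sum_mul]
    rw [Finset.sum_comm]
    exact Finset.sum_congr rfl fun k _ => Finset.sum_congr rfl fun i _ => by ring
  -- symmetry of M
  have hMsym : ∀ i k, M i k = M k i := by
    intro i k
    simp only [hMdef, Matrix.add_apply, Matrix.smul_apply, hQ, hA, smul_eq_mul]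
    rw [dotProduct_comm]
    by_cases h : σ i = σ k <;> simp [h, eq_comm]
  -- structure of M applied to a vector
  have hQv : ∀ (y : Fin m → ℝ) j, (Q *ᵥ y) j = φ j ⬝ᵥ (∑ k, y k • φ k) := by
    intro y j
    rw [hdsum_r]
    simp only [mulVec, dotProduct, hQ]
    exact Finset.sum_congr rfl fun k _ => by ring
  have hAv : ∀ (y : Fin m → ℝ) j,
      (A *ᵥ y) j = ∑ k ∈ Finset.univ.filter (fun k => σ k = σ j), y k := by
    intro y j
    simp only [mulVec, dotProduct, hA, ite_mul, one_mul, zero_mul, Finset.sum_filter]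
    refine Finset.sum_congr rfl fun k _ => ?_
    by_cases h : σ j = σ k
    · rw [if_pos h, if_pos h.symm]
    · rw [if_neg h, if_neg (fun hh => h hh.symm)]
  have hMv : ∀ y : Fin m → ℝ, M *ᵥ y = Q *ᵥ y + (1 / (2 * C)) • (A *ᵥ y) := by
    intro y
    rw [hMdef, add_mulVec, smul_mulVec]
  have hMva : ∀ j, (M *ᵥ αstar) j = wstar ⬝ᵥ φ j + ξstar (σ j) := by
    intro j
    rw [hMv, Pi.add_apply, Pi.smul_apply, hQv, hAv, smul_eq_mul, ← hw, dotProduct_comm]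
    rw [hξ (σ j)]
  set a : ℝ := αstar ⬝ᵥ (M *ᵥ αstar) with hadef
  set b : ℝ := v ⬝ᵥ αstar with hbdef
  have hfα : f αstar = (1/2) * a - b := by rw [hf]
  have hSξ : ∀ i, (∑ j ∈ Finset.univ.filter (fun j => σ j = i), αstar j) = 2*C*ξstar i := by
    intro i; rw [hξ i]; field_simp
  -- value of a
  have ha : a = wstar ⬝ᵥ wstar + 2*C*∑ i, ξstar i ^ 2 := by
    have e1 : a = ∑ j, αstar j * (wstar ⬝ᵥ φ j + ξstar (σ j)) := by
      rw [hadef]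
      show ∑ j, αstar j * (M *ᵥ αstar) j = _
      exact Finset.sum_congr rfl fun j _ => by rw [hMva]
    have e2 : ∑ j, αstar j * (wstar ⬝ᵥ φ j + ξstar (σ j))
        = (∑ j, αstar j * (wstar ⬝ᵥ φ j)) + ∑ j, αstar j * ξstar (σ j) := by
      rw [← Finset.sum_add_distrib]
      exact Finset.sum_congr rfl fun j _ => by ring
    rw [e1, e2, ← hdsum_r wstar αstar, ← hw, ssvm_fiber_sum σ αstar ξstar]
    simp only [hSξ]
    rw [Finset.mul_sum]
    congr 1
    exact Finset.sum_congr rfl fun i _ => by ring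
  have hwnn : 0 ≤ wstar ⬝ᵥ wstar := by
    simp only [dotProduct]
    exact Finset.sum_nonneg fun i _ => mul_self_nonneg _
  have hξnn : 0 ≤ ∑ i, ξstar i ^ 2 := Finset.sum_nonneg fun i _ => sq_nonneg _
  have hanonneg : 0 ≤ a := by nlinarith
  -- KKT stationarity-type fact 1: feasibility
  have hkey1 : ∀ j, v j ≤ wstar ⬝ᵥ φ j + ξstar (σ j) := by
    intro j
    by_contra hlt
    push_neg at hlt
    set c : ℝ := wstar ⬝ᵥ φ j + ξstar (σ j) - v j with hcdef
    have hc0 : c < 0 := by rw [hcdef]; linarith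
    have hφnn : 0 ≤ φ j ⬝ᵥ φ j := by
      simp only [dotProduct]
      exact Finset.sum_nonneg fun i _ => mul_self_nonneg _
    have hMjj : 0 < M j j := by
      have hMjjval : M j j = φ j ⬝ᵥ φ j + 1 / (2*C) := by
        simp only [hMdef, Matrix.add_apply, Matrix.smul_apply, hQ, hA, smul_eq_mul,
          if_pos rfl, eq_self_iff_true, if_true, mul_one]
      rw [hMjjval]
      have h1 : (0:ℝ) < 1 / (2*C) := by positivity
      linarith
    set t : ℝ := -c / M j j with htdef
    have ht : 0 < t := div_pos (neg_pos.mpr hc0) hMjj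
    have htM : t * M j j = -c := div_mul_cancel₀ _ (ne_of_gt hMjj)
    set e : Fin m → ℝ := t • (Pi.single j (1:ℝ) : Fin m → ℝ) with hedef
    have he_dot : ∀ x : Fin m → ℝ, e ⬝ᵥ x = t * x j := by
      intro x
      rw [hedef, smul_dotProduct, single_dotProduct, smul_eq_mul, one_mul]
    have hMe : M *ᵥ e = t • (fun i => M i j) := by
      rw [hedef, mulVec_smul, mulVec_single]
      simp [mul_one]
      rfl
    have hx_Me : ∀ x : Fin m → ℝ, x ⬝ᵥ (M *ᵥ e) = t * (M *ᵥ x) j := by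
      intro x
      rw [hMe, dotProduct_smul, smul_eq_mul]
      congr 1
      simp only [dotProduct, mulVec]
      exact Finset.sum_congr rfl fun i _ => by rw [hMsym i j]; ring
    set β : Fin m → ℝ := αstar + e with hβdef
    have hβnn : ∀ k, 0 ≤ β k := by
      intro k
      simp only [hβdef, hedef, Pi.add_apply, Pi.smul_apply, Pi.single_apply, smul_eq_mul]
      by_cases hk : k = j
      · simp only [if_pos hk]
        have := hαnn k; linarith
      · simp only [if_neg hk]
        have := hαnn k; linarith
    have hcmp := hαopt β hβnn
    have hMj : (M *ᵥ αstar) j = v j + c := by rw [hMva]; rw [hcdef]; ring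
    have hMej : (M *ᵥ e) j = t * M j j := by rw [hMe]; simp
    have hve : v ⬝ᵥ e = t * v j := by rw [dotProduct_comm]; exact he_dot v
    have expand : (αstar + e) ⬝ᵥ (M *ᵥ (αstar + e))
        = a + (t * (M *ᵥ αstar) j + (t * (M *ᵥ αstar) j + t * (t * M j j))) := by
      rw [Matrix.mulVec_add, dotProduct_add, add_dotProduct, add_dotProduct]
      rw [hx_Me αstar, he_dot (M *ᵥ αstar), he_dot (M *ᵥ e), hMej, ← hadef]
      ring
    have hfβ : f β = f αstar + (t * c + (1/2) * (t * (t * M j j))) := by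
      rw [hf β, hf αstar, hβdef, expand, dotProduct_add, hve, hMj, ← hbdef]
      ring
    rw [hfβ] at hcmp
    have hneg : t * c + (1/2) * (t * (t * M j j)) < 0 := by
      rw [htM]
      have : t * c + 1/2 * (t * -c) = (1/2) * (t * c) := by ring
      rw [this]
      have := mul_pos ht (neg_pos.mpr hc0)
      nlinarith
    linarith
  -- KKT fact 2: a = b
  have hscale : ∀ t : ℝ, f (t • αstar) = t^2 * ((1/2)*a) - t * b := by
    intro t
    rw [hf, mulVec_smul, dotProduct_smul, smul_dotProduct, dotProduct_smul]
    simp only [smul_eq_mul, ← hadef, ← hbdef]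
    ring
  have g0 : (1/2)*a - b ≤ 0 := by
    have := hαopt ((0:ℝ) • αstar) (fun j => by simp)
    rw [hscale, hfα] at this
    linarith [this]
  have hab : a = b := by
    rcases eq_or_lt_of_le hanonneg with haz | hap
    · have g2 := hαopt ((2:ℝ) • αstar) (fun j => by have := hαnn j; simp; linarith)
      rw [hscale, hfα] at g2
      nlinarith
    · have hb0 : 0 ≤ b / a := div_nonneg (by linarith) (le_of_lt hap)
      have gt := hαopt ((b/a) • αstar) (fun j => mul_nonneg hb0 (hαnn j))
      rw [hscale, hfα] at gt
      have hba : (b/a) * a = b := div_mul_cancel₀ _ (ne_of_gt hap)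
      set s : ℝ := b / a with hsdef
      have h2 : (a - b)^2 ≤ 0 := by nlinarith [sq_nonneg (1 - s), mul_pos hap hap]
      nlinarith [sq_nonneg (a - b)]
  refine ⟨fun j => by have := hkey1 j; simp only [ge_iff_le]; linarith, ?_, ?_⟩
  · -- primal optimality
    intro w ξ hfeas
    have hble : b ≤ w ⬝ᵥ wstar + 2*C*∑ i, ξstar i * ξ i := by
      have e1 : b = ∑ j, v j * αstar j := by rw [hbdef]; rfl
      have e2 : ∑ j, v j * αstar j ≤ ∑ j, (w ⬝ᵥ φ j + ξ (σ j)) * αstar j := by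
        refine Finset.sum_le_sum fun j _ => ?_
        have := hfeas j
        exact mul_le_mul_of_nonneg_right (by linarith) (hαnn j)
      have e3 : ∑ j, (w ⬝ᵥ φ j + ξ (σ j)) * αstar j
          = (∑ j, αstar j * (w ⬝ᵥ φ j)) + ∑ j, αstar j * ξ (σ j) := by
        rw [← Finset.sum_add_distrib]
        exact Finset.sum_congr rfl fun j _ => by ring
      have e4 : (∑ j, αstar j * (w ⬝ᵥ φ j)) = w ⬝ᵥ wstar := by
        rw [← hdsum_r w αstar, ← hw]
      have e5 : ∑ j, αstar j * ξ (σ j) = 2*C*∑ i, ξstar i * ξ i := by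
        rw [ssvm_fiber_sum σ αstar ξ]
        simp only [hSξ]
        rw [Finset.mul_sum]
        exact Finset.sum_congr rfl fun i _ => by ring
      rw [e1]
      calc ∑ j, v j * αstar j ≤ ∑ j, (w ⬝ᵥ φ j + ξ (σ j)) * αstar j := e2
        _ = w ⬝ᵥ wstar + 2*C*∑ i, ξstar i * ξ i := by rw [e3, e4, e5]
    have hWc : 2*(w ⬝ᵥ wstar) ≤ w ⬝ᵥ w + wstar ⬝ᵥ wstar := by
      have h1 : w ⬝ᵥ w - 2*(w ⬝ᵥ wstar) + wstar ⬝ᵥ wstar = ∑ i, (w i - wstar i)^2 := by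
        simp only [dotProduct, Finset.mul_sum, ← Finset.sum_sub_distrib,
          ← Finset.sum_add_distrib]
        exact Finset.sum_congr rfl fun i _ => by ring
      have h2 : 0 ≤ ∑ i, (w i - wstar i)^2 := Finset.sum_nonneg fun i _ => sq_nonneg _
      linarith
    have hXc : 2*∑ i, ξstar i * ξ i ≤ ∑ i, (ξ i)^2 + ∑ i, (ξstar i)^2 := by
      have h1 : ∑ i, (ξ i)^2 - 2*∑ i, ξstar i * ξ i + ∑ i, (ξstar i)^2
          = ∑ i, (ξ i - ξstar i)^2 := by
        simp only [Finset.mul_sum, ← Finset.sum_sub_distrib, ← Finset.sum_add_distrib]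
        exact Finset.sum_congr rfl fun i _ => by ring
      have h2 : 0 ≤ ∑ i, (ξ i - ξstar i)^2 := Finset.sum_nonneg fun i _ => sq_nonneg _
      linarith
    have hCX : C*(2*∑ i, ξstar i * ξ i) ≤ C*(∑ i, (ξ i)^2 + ∑ i, (ξstar i)^2) :=
      mul_le_mul_of_nonneg_left hXc (le_of_lt hC)
    linarith
  · -- value equality
    rw [hfα]
    linarith
end
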